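/- arXiv:math/9908025 — 2 statements merged into one kernel-verified Lean document; each statement's English description precedes it below -/
import Mathlib

section
/- Suppose A is a closed densely defined operator on F whose domain and whose adjoint's domain both contain every reproducing kernel e_w, and suppose ⟨(e_u · e_v), A* e_w⟩ = ⟨A e_v, conj(e_u(w)) e_w⟩ for all u, v, w ∈ ℂ (i.e. A commutes with each multiplication operator M_{e_u} relative to K). Then, setting φ = A(e_0) = A(1), one has A e_v = φ · e_v for every v ∈ ℂ; in particular φ e_v ∈ F for all v, so φ ∈ Λ. -/
open MeasureTheory Complex Filter

/-- Gaussian measure dμ(z) = (r/π) e^{-r|z|²} dz on ℂ. -/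
noncomputable def gaussianM (r : ℝ) : Measure ℂ :=
  volume.withDensity fun z => ENNReal.ofReal ((r / Real.pi) * Real.exp (-r * ‖z‖ ^ 2))

/-- Reproducing kernel e_w(z) = exp(r z conj w). -/
noncomputable def ker (r : ℝ) (w : ℂ) : ℂ → ℂ := fun z => Complex.exp ((r : ℂ) * z * (starRingEnd ℂ) w)

/-- Membership in Bargmann-Segal space: entire and square-integrable against gaussianM r. -/
def InF (r : ℝ) (f : ℂ → ℂ) : Prop := Differentiable ℂ f ∧ MemLp f 2 (gaussianM r)

/-- Inner product of F, expressed as an integral. -/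
noncomputable def innerF (r : ℝ) (f g : ℂ → ℂ) : ℂ :=
  ∫ z, f z * (starRingEnd ℂ) (g z) ∂ gaussianM r

/-- The Newman-Shapiro class Λ. -/
def InLambda (r : ℝ) (φ : ℂ → ℂ) : Prop :=
  Differentiable ℂ φ ∧ ∀ N > (0:ℝ), ∃ C : ℝ, ∀ z : ℂ,
    ‖φ z‖ ≤ C * Real.exp (r * ‖z‖ ^ 2 / 2 - N * ‖z‖)

section basic
variable {r : ℝ} (hr : 0 < r)

/-- the density as an ℝ-valued function -/
noncomputable def gdens (r : ℝ) : ℂ → ℝ := fun z => (r / Real.pi) * Real.exp (-r * ‖z‖ ^ 2)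

lemma gdens_nonneg (hr : 0 < r) (z : ℂ) : 0 ≤ gdens r z :=
  mul_nonneg (div_nonneg hr.le Real.pi_pos.le) (Real.exp_pos _).le

lemma gdens_meas : Measurable (fun z => (gdens r z).toNNReal) := by
  apply Measurable.real_toNNReal
  exact (measurable_const.mul (((continuous_norm.measurable).pow_const 2).const_mul (-r)).exp)

lemma gaussianM_eq : gaussianM r = volume.withDensity fun z => ((gdens r z).toNNReal : ENNReal) := by
  simp [gaussianM, gdens, ENNReal.ofReal]

variable {E : Type*} [NormedAddCommGroup E] [NormedSpace ℝ E]

lemma integral_gaussianM (hr : 0 < r) (g : ℂ → E) :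
    ∫ z, g z ∂gaussianM r = ∫ z, gdens r z • g z := by
  rw [gaussianM_eq, integral_withDensity_eq_integral_smul gdens_meas]
  congr 1; ext z
  rw [NNReal.smul_def, Real.coe_toNNReal _ (gdens_nonneg hr z)]

lemma integrable_gaussianM_iff (hr : 0 < r) (g : ℂ → E) :
    Integrable g (gaussianM r) ↔ Integrable (fun z => gdens r z • g z) volume := by
  rw [gaussianM_eq, integrable_withDensity_iff_integrable_smul gdens_meas]
  constructor <;> intro h <;> apply h.congr <;> filter_upwards with z <;>
    rw [NNReal.smul_def, Real.coe_toNNReal _ (gdens_nonneg hr z)]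

lemma ker_mul (u v : ℂ) (z : ℂ) : ker r u z * ker r v z = ker r (u + v) z := by
  rw [_root_.ker, _root_.ker, _root_.ker, ← Complex.exp_add]
  congr 1
  rw [map_add]
  ring

lemma ker_zero : ker r 0 = fun _ => 1 := by
  funext z; simp [_root_.ker]

lemma ker_diff (w : ℂ) : Differentiable ℂ (ker r w) := by
  apply Complex.differentiable_exp.comp
  exact (differentiable_const _).mul differentiable_id |>.mul (differentiable_const _)

lemma ker_abs (w z : ℂ) : ‖ker r w z‖ = Real.exp (r * ((z * (starRingEnd ℂ) w).re)) := by
  rw [_root_.ker, Complex.norm_exp]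
  congr 1
  rw [show (r:ℂ) * z * (starRingEnd ℂ) w = (r:ℂ) * (z * (starRingEnd ℂ) w) by ring]
  simp [Complex.mul_re]

end basic

section memlp
variable {r : ℝ}

lemma ker_continuous (w : ℂ) : Continuous (ker r w) :=
  Complex.continuous_exp.comp ((continuous_const.mul continuous_id).mul continuous_const)

lemma integrable_gauss_decay {c : ℝ} (hc : 0 < c) :
    Integrable (fun z : ℂ => Real.exp (-c * ‖z‖ ^ 2)) volume := by
  have h := (GaussianFourier.integrable_cexp_neg_mul_sq_norm_add (V := ℂ)
    (b := (c : ℂ)) (by simpa using hc) 0 0).norm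
  apply h.congr
  filter_upwards with z
  simp [Complex.norm_exp]
  norm_cast
  exact Or.inl rfl

lemma gdens_cont : Continuous (gdens r) :=
  continuous_const.mul ((continuous_const.mul (continuous_norm.pow 2)).rexp)

lemma ker_sq_norm (w z : ℂ) : ‖ker r w z‖ ^ 2 = Real.exp (2 * r * (z * (starRingEnd ℂ) w).re) := by
  rw [ker_abs, ← Real.exp_nat_mul]
  ring_nf

lemma memLp_ker (hr : 0 < r) (w : ℂ) : MemLp (ker r w) 2 (gaussianM r) := by
  rw [memLp_two_iff_integrable_sq_norm ((ker_continuous w).aestronglyMeasurable),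
      integrable_gaussianM_iff hr]
  apply Integrable.mono'
    (((integrable_gauss_decay (half_pos hr)).const_mul
      ((r / Real.pi) * Real.exp (2 * r * ‖w‖ ^ 2))))
  · exact (gdens_cont.smul ((ker_continuous w).norm.pow 2)).aestronglyMeasurable
  · filter_upwards with z
    have hre : (z * (starRingEnd ℂ) w).re ≤ ‖z‖ * ‖w‖ := by
      calc (z * (starRingEnd ℂ) w).re ≤ |(z * (starRingEnd ℂ) w).re| := le_abs_self _
        _ ≤ ‖z * (starRingEnd ℂ) w‖ := Complex.abs_re_le_norm _
        _ = ‖z‖ * ‖w‖ := by rw [norm_mul, Complex.norm_conj]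
    have hker : gdens r z • ‖ker r w z‖ ^ 2
        = (r / Real.pi) * Real.exp (2 * r * (z * (starRingEnd ℂ) w).re + -r * ‖z‖ ^ 2) := by
      rw [smul_eq_mul, ker_sq_norm, gdens, mul_assoc, ← Real.exp_add]
      ring_nf
    rw [hker, Real.norm_eq_abs, _root_.abs_of_nonneg (by positivity)]
    have hexp : Real.exp (2 * r * (z * (starRingEnd ℂ) w).re + -r * ‖z‖ ^ 2)
        ≤ Real.exp (2 * r * ‖w‖ ^ 2 + -(r / 2) * ‖z‖ ^ 2) := by
      apply Real.exp_le_exp.mpr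
      nlinarith [sq_nonneg (‖z‖ - 2 * ‖w‖), norm_nonneg z,
        norm_nonneg w, hr.le]
    calc r / Real.pi * Real.exp (2 * r * (z * (starRingEnd ℂ) w).re + -r * ‖z‖ ^ 2)
        ≤ r / Real.pi * Real.exp (2 * r * ‖w‖ ^ 2 + -(r / 2) * ‖z‖ ^ 2) :=
          mul_le_mul_of_nonneg_left hexp (by positivity)
      _ = r / Real.pi * Real.exp (2 * r * ‖w‖ ^ 2) *
            Real.exp (-(r / 2) * ‖z‖ ^ 2) := by rw [Real.exp_add, ← mul_assoc]

end memlp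


section inner
open scoped InnerProductSpace
variable {r : ℝ} {f g : ℂ → ℂ}

lemma innerF_eq_inner (hf : MemLp f 2 (gaussianM r)) (hg : MemLp g 2 (gaussianM r)) :
    innerF r f g = (starRingEnd ℂ) ⟪hf.toLp f, hg.toLp g⟫_ℂ := by
  rw [MeasureTheory.L2.inner_def, ← integral_conj]
  apply integral_congr_ae
  filter_upwards [hf.coeFn_toLp, hg.coeFn_toLp] with z h1 h2
  rw [h1, h2, RCLike.inner_apply]
  simp [mul_comm]

lemma integrable_conj' {μ : Measure ℂ} {h : ℂ → ℂ} (hh : Integrable h μ) :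
    Integrable (fun z => (starRingEnd ℂ) (h z)) μ := by
  refine ⟨RCLike.continuous_conj.comp_aestronglyMeasurable hh.1, ?_⟩
  have := hh.2
  rw [HasFiniteIntegral] at this ⊢
  simpa using this

lemma integrable_mul_conj (hf : MemLp f 2 (gaussianM r)) (hg : MemLp g 2 (gaussianM r)) :
    Integrable (fun z => f z * (starRingEnd ℂ) (g z)) (gaussianM r) := by
  have h := integrable_conj' (MeasureTheory.L2.integrable_inner (𝕜 := ℂ) (hf.toLp f) (hg.toLp g))
  apply h.congr
  filter_upwards [hf.coeFn_toLp, hg.coeFn_toLp] with z h1 h2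
  rw [RCLike.inner_apply, h1, h2]
  simp [mul_comm]

lemma norm_innerF_le (hf : MemLp f 2 (gaussianM r)) (hg : MemLp g 2 (gaussianM r)) :
    ‖innerF r f g‖ ≤ ‖hf.toLp f‖ * ‖hg.toLp g‖ := by
  rw [innerF_eq_inner hf hg, RCLike.norm_conj]
  exact norm_inner_le_norm _ _

end inner
open Set Real

lemma polar_integrableOn (F : ℂ → ℂ) (hF : Integrable F volume) :
    IntegrableOn (fun p : ℝ × ℝ => p.1 • F (Complex.polarCoord.symm p))
      polarCoord.target volume := by
  set B : ℝ × ℝ → ℝ × ℝ →L[ℝ] ℝ × ℝ := fun p =>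
    LinearMap.toContinuousLinearMap (Matrix.toLin (Module.Basis.finTwoProd ℝ) (Module.Basis.finTwoProd ℝ)
      !![Real.cos p.2, -p.1 * Real.sin p.2; Real.sin p.2, p.1 * Real.cos p.2]) with hB
  have hder : ∀ p ∈ polarCoord.target, HasFDerivWithinAt polarCoord.symm (B p)
      polarCoord.target p := fun p _ => (hasFDerivAt_polarCoord_symm p).hasFDerivWithinAt
  have B_det : ∀ p, (B p).det = p.1 := by
    intro p
    conv_rhs => rw [← one_mul p.1, ← Real.cos_sq_add_sin_sq p.2]
    simp only [hB, neg_mul, LinearMap.det_toContinuousLinearMap, LinearMap.det_toLin,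
      Matrix.det_fin_two_of, sub_neg_eq_add]
    ring
  have hinj : InjOn polarCoord.symm polarCoord.target := polarCoord.symm.injOn
  set G : ℝ × ℝ → ℂ := F ∘ Complex.measurableEquivRealProd.symm with hG
  have hGint : Integrable G volume :=
    ((Complex.volume_preserving_equiv_real_prod.symm).integrable_comp_emb
      (Complex.measurableEquivRealProd.symm.measurableEmbedding)).mpr hF
  have himg : polarCoord.symm '' polarCoord.target = polarCoord.source :=
    polarCoord.symm_image_target_eq_source
  have h1 : IntegrableOn G (polarCoord.symm '' polarCoord.target) volume := by
    rw [himg]; exact hGint.integrableOn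
  have h2 := (integrableOn_image_iff_integrableOn_abs_det_fderiv_smul volume
    polarCoord.open_target.measurableSet hder hinj G).mp h1
  apply h2.congr_fun _ polarCoord.open_target.measurableSet
  intro p hp
  show |(B p).det| • G (polarCoord.symm p) = p.1 • F (Complex.polarCoord.symm p)
  rw [B_det, abs_of_pos hp.1]
  rfl

lemma circle_avg (F : ℂ → ℂ) (hF : Differentiable ℂ F) {ρ : ℝ} (hρ : 0 < ρ) :
    ∫ θ in Set.Ioo (-π) π, F (Complex.polarCoord.symm (ρ, θ))
      = ((2 * π : ℝ) : ℂ) * F 0 := by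
  have h0 : ∀ θ : ℝ, Complex.polarCoord.symm (ρ, θ) = circleMap 0 ρ θ := by
    intro θ
    rw [Complex.polarCoord_symm_apply, circleMap, Complex.exp_mul_I]
    push_cast
    ring
  simp only [h0]
  rw [← integral_Ioc_eq_integral_Ioo,
    ← intervalIntegral.integral_of_le (by linarith [Real.pi_pos] : -π ≤ π)]
  have hper : Function.Periodic (fun θ => F (circleMap 0 ρ θ)) (2 * π) :=
    (periodic_circleMap 0 ρ).comp F
  have hshift := hper.intervalIntegral_add_eq (-π) 0
  rw [show -π + 2 * π = π by ring] at hshift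
  rw [hshift, zero_add]
  have hD : DiffContOnCl ℂ F (Metric.ball 0 ρ) := hF.diffContOnCl
  have hC := hD.circleIntegral_sub_inv_smul (Metric.mem_ball_self hρ)
  rw [circleIntegral] at hC
  have hcongr : ∀ θ ∈ Set.uIcc (0:ℝ) (2*π),
      deriv (circleMap 0 ρ) θ • (circleMap 0 ρ θ - 0)⁻¹ • F (circleMap 0 ρ θ)
        = I * F (circleMap 0 ρ θ) := by
    intro θ _
    rw [deriv_circleMap, smul_eq_mul, smul_eq_mul, sub_zero]
    have hne : circleMap 0 ρ θ ≠ 0 := circleMap_ne_center (ne_of_gt hρ)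
    field_simp
  rw [intervalIntegral.integral_congr hcongr, intervalIntegral.integral_const_mul] at hC
  have hI : (2 * ↑π * I : ℂ) • F 0 = I * (((2 * π : ℝ) : ℂ) * F 0) := by
    rw [smul_eq_mul]; push_cast; ring
  rw [hI] at hC
  exact mul_left_cancel₀ I_ne_zero hC

lemma mvp_gauss {r : ℝ} (hr : 0 < r) (F : ℂ → ℂ) (hF : Differentiable ℂ F)
    (hInt : Integrable (fun z => F z * ((Real.exp (-r * ‖z‖ ^ 2) : ℝ) : ℂ)) volume) :
    ∫ z, F z * ((Real.exp (-r * ‖z‖ ^ 2) : ℝ) : ℂ) = ((π / r : ℝ) : ℂ) * F 0 := by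
  set f : ℂ → ℂ := fun z => F z * ((Real.exp (-r * ‖z‖ ^ 2) : ℝ) : ℂ) with hf
  rw [← Complex.integral_comp_polarCoord_symm f]
  have hIO := polar_integrableOn f hInt
  have htarget : polarCoord.target = Set.Ioi (0:ℝ) ×ˢ Set.Ioo (-π) π := rfl
  rw [htarget] at hIO ⊢
  rw [Measure.volume_eq_prod] at hIO ⊢
  rw [setIntegral_prod _ hIO]
  have hinner : ∀ ρ ∈ Set.Ioi (0:ℝ),
      (∫ θ in Set.Ioo (-π) π, (ρ, θ).1 • f (Complex.polarCoord.symm (ρ, θ)))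
        = (((2 * π : ℝ) : ℂ) * F 0) * ((ρ:ℂ) * Complex.exp (-(r:ℂ) * (ρ:ℂ) ^ 2)) := by
    intro ρ hρ
    rw [Set.mem_Ioi] at hρ
    have habs : ∀ θ : ℝ, ‖Complex.polarCoord.symm (ρ, θ)‖ = ρ := by
      intro θ
      rw [Complex.norm_polarCoord_symm]
      exact abs_of_pos hρ
    have hc : ∀ θ : ℝ, (ρ, θ).1 • f (Complex.polarCoord.symm (ρ, θ))
        = ((ρ:ℂ) * Complex.exp (-(r:ℂ) * (ρ:ℂ) ^ 2)) * F (Complex.polarCoord.symm (ρ, θ)) := by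
      intro θ
      rw [hf]
      simp only [habs θ]
      rw [Complex.real_smul]
      rw [show ((Real.exp (-r * ρ ^ 2) : ℝ) : ℂ) = Complex.exp (-(r:ℂ) * (ρ:ℂ) ^ 2) by
        rw [Complex.ofReal_exp]; norm_cast]
      ring
    simp only [hc]
    rw [MeasureTheory.integral_const_mul, circle_avg F hF hρ]
    ring
  rw [setIntegral_congr_fun measurableSet_Ioi hinner, MeasureTheory.integral_const_mul,
    integral_mul_cexp_neg_mul_sq (by simpa using hr)]
  have : ((π / r : ℝ) : ℂ) = ((2 * π : ℝ) : ℂ) * (2 * (r:ℂ))⁻¹ := by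
    push_cast
    field_simp
  rw [this]
  ring

section repro
variable {r : ℝ}

lemma reproducing (hr : 0 < r) {f : ℂ → ℂ} (hdiff : Differentiable ℂ f)
    (hmem : MemLp f 2 (gaussianM r)) (w : ℂ) : innerF r f (ker r w) = f w := by
  have hint : Integrable (fun z => f z * (starRingEnd ℂ) (ker r w z)) (gaussianM r) :=
    integrable_mul_conj hmem (memLp_ker hr w)
  set G : ℂ → ℂ := fun z =>
    (f z * Complex.exp ((r:ℂ) * (starRingEnd ℂ) z * w)) * ((Real.exp (-r * ‖z‖ ^ 2) : ℝ) : ℂ)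
    with hG
  have hkey : ∀ z : ℂ, gdens r z • (f z * (starRingEnd ℂ) (ker r w z))
      = (r / Real.pi) • G z := by
    intro z
    rw [hG, gdens]
    simp only [Complex.real_smul]
    rw [show (starRingEnd ℂ) (ker r w z)
        = Complex.exp ((r:ℂ) * (starRingEnd ℂ) z * w) by
      rw [_root_.ker, ← Complex.exp_conj]
      congr 1
      simp [map_mul, Complex.conj_conj]]
    push_cast
    ring
  have hG_eq : innerF r f (ker r w) = (r / Real.pi) • ∫ z, G z := by
    rw [innerF, integral_gaussianM hr]
    simp_rw [hkey]
    rw [integral_smul]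
  have hGint : Integrable G volume := by
    have h1 := (integrable_gaussianM_iff hr _).mp hint
    have h2 := h1.smul (Real.pi / r)
    apply h2.congr
    filter_upwards with z
    simp only [Pi.smul_apply]
    rw [hkey z, smul_smul]
    rw [show Real.pi / r * (r / Real.pi) = 1 by
      field_simp]
    rw [one_smul]
  -- translate by w
  set H : ℂ → ℂ := fun ζ => f (w + ζ) * Complex.exp (-(r:ℂ) * ζ * (starRingEnd ℂ) w) with hH
  have htrans : ∀ ζ : ℂ, G (w + ζ) = H ζ * ((Real.exp (-r * ‖ζ‖ ^ 2) : ℝ) : ℂ) := by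
    intro ζ
    simp only [hG, hH]
    have habs : ∀ x : ℂ, ((( -r * ‖x‖ ^ 2 : ℝ)) : ℂ) = -(r:ℂ) * (x * (starRingEnd ℂ) x) := by
      intro x
      rw [Complex.mul_conj, ← Complex.sq_norm]
      push_cast
      ring
    rw [Complex.ofReal_exp, Complex.ofReal_exp, habs, habs, mul_assoc (f (w + ζ)),
      ← Complex.exp_add, mul_assoc (f (w + ζ)), ← Complex.exp_add]
    congr 1
    rw [map_add]
    ring
  have hHdiff : Differentiable ℂ H := by
    apply Differentiable.mul
    · exact hdiff.comp ((differentiable_const _).add differentiable_id)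
    · apply Complex.differentiable_exp.comp
      exact ((differentiable_const _).mul differentiable_id).mul (differentiable_const _)
  have hHint : Integrable (fun ζ => H ζ * ((Real.exp (-r * ‖ζ‖ ^ 2) : ℝ) : ℂ)) volume := by
    have := hGint.comp_add_left w
    apply this.congr
    filter_upwards with ζ
    rw [htrans]
  have hmvp := mvp_gauss hr H hHdiff hHint
  have hshift : (∫ z, G z) = ∫ ζ, H ζ * ((Real.exp (-r * ‖ζ‖ ^ 2) : ℝ) : ℂ) := by
    rw [← MeasureTheory.integral_add_left_eq_self G w]
    exact integral_congr_ae (Filter.Eventually.of_forall fun ζ => htrans ζ)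
  rw [hG_eq, hshift, hmvp, hH]
  simp only [add_zero, mul_zero, neg_mul, zero_mul, neg_zero, Complex.exp_zero, mul_one]
  rw [Complex.real_smul]
  rw [show ((r / Real.pi : ℝ) : ℂ) * (((Real.pi / r : ℝ) : ℂ) * f w) = f w by
    push_cast
    have h1 : (r : ℂ) ≠ 0 := Complex.ofReal_ne_zero.mpr hr.ne'
    have h2 : (Real.pi : ℂ) ≠ 0 := Complex.ofReal_ne_zero.mpr Real.pi_ne_zero
    field_simp]

end repro

section bound
open scoped InnerProductSpace
variable {r : ℝ}

lemma norm_toLp_ker (hr : 0 < r) (w : ℂ) :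
    ‖(memLp_ker hr w).toLp (ker r w)‖ = Real.exp (r * ‖w‖ ^ 2 / 2) := by
  have hrep : innerF r (ker r w) (ker r w) = ker r w w :=
    reproducing hr (ker_diff w) (memLp_ker hr w) w
  have hval : ker r w w = ((Real.exp (r * ‖w‖ ^ 2) : ℝ) : ℂ) := by
    rw [_root_.ker, Complex.ofReal_exp]
    congr 1
    rw [mul_assoc, Complex.mul_conj, ← Complex.sq_norm]
    push_cast
    ring
  have hinner := innerF_eq_inner (memLp_ker hr w) (memLp_ker hr w)
  rw [hrep, hval] at hinner
  have h2 : (⟪(memLp_ker hr w).toLp (ker r w), (memLp_ker hr w).toLp (ker r w)⟫_ℂ)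
      = ((Real.exp (r * ‖w‖ ^ 2) : ℝ) : ℂ) := by
    have := congrArg (starRingEnd ℂ) hinner
    rw [Complex.conj_conj, Complex.conj_ofReal] at this
    exact this.symm
  rw [inner_self_eq_norm_sq_to_K] at h2
  have h3 : ‖(memLp_ker hr w).toLp (ker r w)‖ ^ 2 = Real.exp (r * ‖w‖ ^ 2) := by
    have h4 : (((‖(memLp_ker hr w).toLp (ker r w)‖ ^ 2 : ℝ)) : ℂ)
        = ((Real.exp (r * ‖w‖ ^ 2) : ℝ) : ℂ) := by rw [Complex.ofReal_pow]; exact h2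
    exact_mod_cast h4
  rw [show r * ‖w‖ ^ 2 / 2 = (r * ‖w‖ ^ 2) / 2 by ring, Real.exp_half,
    ← h3, Real.sqrt_sq (norm_nonneg _)]

lemma pointwise_bound (hr : 0 < r) {g : ℂ → ℂ} (hgd : Differentiable ℂ g)
    (hgm : MemLp g 2 (gaussianM r)) (w : ℂ) :
    ‖g w‖ ≤ ‖hgm.toLp g‖ * Real.exp (r * ‖w‖ ^ 2 / 2) := by
  rw [← reproducing hr hgd hgm w]
  calc ‖innerF r g (ker r w)‖ ≤ ‖hgm.toLp g‖ * ‖(memLp_ker hr w).toLp (ker r w)‖ :=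
        norm_innerF_le hgm (memLp_ker hr w)
    _ = ‖hgm.toLp g‖ * Real.exp (r * ‖w‖ ^ 2 / 2) := by rw [norm_toLp_ker hr w]

end bound

theorem stmt11 (r : ℝ) (hr : 0 < r) (Ae AstarE : ℂ → ℂ → ℂ)
    (hAe : ∀ v : ℂ, InF r (Ae v)) (hAst : ∀ w : ℂ, InF r (AstarE w))
    (hadj : ∀ v w : ℂ, innerF r (Ae v) (ker r w) = innerF r (ker r v) (AstarE w))
    (hcomm : ∀ u v w : ℂ,
      innerF r (fun z => ker r u z * ker r v z) (AstarE w)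
        = innerF r (Ae v) (fun z => (starRingEnd ℂ) (ker r u w) * ker r w z)) :
    (∀ v z : ℂ, Ae v z = Ae 0 z * ker r v z) ∧ InLambda r (Ae 0) := by
  have hid : ∀ v z : ℂ, Ae v z = Ae 0 z * _root_.ker r v z := by
    have key : ∀ u v w : ℂ, Ae (u + v) w = _root_.ker r u w * Ae v w := by
      intro u v w
      have h1 : innerF r (fun z => _root_.ker r u z * _root_.ker r v z) (AstarE w)
          = innerF r (_root_.ker r (u + v)) (AstarE w) := by
        unfold innerF
        exact integral_congr_ae (Filter.Eventually.of_forall fun z => by simp only []; rw [ker_mul])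
      have h2 : innerF r (_root_.ker r (u + v)) (AstarE w) = Ae (u + v) w := by
        rw [← hadj (u + v) w]
        exact reproducing hr (hAe (u + v)).1 (hAe (u + v)).2 w
      have h3 : innerF r (Ae v) (fun z => (starRingEnd ℂ) (_root_.ker r u w) * _root_.ker r w z)
          = _root_.ker r u w * Ae v w := by
        have heq : innerF r (Ae v) (fun z => (starRingEnd ℂ) (_root_.ker r u w) * _root_.ker r w z)
            = ∫ z, _root_.ker r u w * (Ae v z * (starRingEnd ℂ) (_root_.ker r w z))
                ∂ gaussianM r := by
          unfold innerF
          exact integral_congr_ae (Filter.Eventually.of_forall fun z => by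
            simp only []
            rw [map_mul, Complex.conj_conj]; ring)
        rw [heq, MeasureTheory.integral_const_mul,
          show (∫ z, Ae v z * (starRingEnd ℂ) (_root_.ker r w z) ∂ gaussianM r)
            = innerF r (Ae v) (_root_.ker r w) from rfl,
          reproducing hr (hAe v).1 (hAe v).2 w]
      calc Ae (u + v) w = innerF r (_root_.ker r (u + v)) (AstarE w) := h2.symm
        _ = innerF r (fun z => _root_.ker r u z * _root_.ker r v z) (AstarE w) := h1.symm
        _ = innerF r (Ae v) (fun z => (starRingEnd ℂ) (_root_.ker r u w) * _root_.ker r w z) :=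
            hcomm u v w
        _ = _root_.ker r u w * Ae v w := h3
    intro v z
    have h := key v 0 z
    rw [add_zero] at h
    rw [h]
    ring
  refine ⟨hid, (hAe 0).1, ?_⟩
  intro N hN
  set s : ℝ := 2 * N / r with hs
  have hs0 : 0 < s := by positivity
  have hrs : r * s = 2 * N := by rw [hs]; field_simp [hr.ne']
  set q : ℂ → ℝ := fun v => ‖(hAe v).2.toLp (Ae v)‖ with hq
  refine ⟨max (max (q (s:ℂ)) (q (-(s:ℂ)))) (max (q ((s:ℂ) * Complex.I)) (q (-(s:ℂ) * Complex.I))),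
    ?_⟩
  set C : ℝ := max (max (q (s:ℂ)) (q (-(s:ℂ)))) (max (q ((s:ℂ) * Complex.I)) (q (-(s:ℂ) * Complex.I)))
    with hC
  intro z
  have habsz := Complex.norm_le_abs_re_add_abs_im z
  obtain ⟨v, hvC, hvre⟩ : ∃ v : ℂ, q v ≤ C ∧ N * ‖z‖ ≤ r * (z * (starRingEnd ℂ) v).re := by
    rcases le_total |z.im| |z.re| with hm | hm
    · rcases le_total 0 z.re with hsgn | hsgn
      · refine ⟨(s:ℂ), (le_max_left _ _).trans (le_max_left _ _), ?_⟩
        have hre : (z * (starRingEnd ℂ) (s:ℂ)).re = z.re * s := by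
          rw [Complex.conj_ofReal]
          simp [Complex.mul_re]
        rw [hre]
        have : |z.re| = z.re := abs_of_nonneg hsgn
        nlinarith [hN.le, norm_nonneg z]
      · refine ⟨-(s:ℂ), (le_max_right _ _).trans (le_max_left _ _), ?_⟩
        have hre : (z * (starRingEnd ℂ) (-(s:ℂ))).re = -(z.re * s) := by
          rw [map_neg, Complex.conj_ofReal]
          simp [Complex.mul_re]
        rw [hre]
        have : |z.re| = -z.re := abs_of_nonpos hsgn
        nlinarith [hN.le, norm_nonneg z]
    · rcases le_total 0 z.im with hsgn | hsgn
      · refine ⟨(s:ℂ) * Complex.I, (le_max_left _ _).trans (le_max_right _ _), ?_⟩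
        have hre : (z * (starRingEnd ℂ) ((s:ℂ) * Complex.I)).re = z.im * s := by
          rw [map_mul, Complex.conj_ofReal, Complex.conj_I]
          simp [Complex.mul_re]
        rw [hre]
        have : |z.im| = z.im := abs_of_nonneg hsgn
        nlinarith [hN.le, norm_nonneg z]
      · refine ⟨-(s:ℂ) * Complex.I, (le_max_right _ _).trans (le_max_right _ _), ?_⟩
        have hre : (z * (starRingEnd ℂ) (-(s:ℂ) * Complex.I)).re = -(z.im * s) := by
          rw [map_mul, map_neg, Complex.conj_ofReal, Complex.conj_I]
          simp [Complex.mul_re]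
        rw [hre]
        have : |z.im| = -z.im := abs_of_nonpos hsgn
        nlinarith [hN.le, norm_nonneg z]
  have hb := pointwise_bound hr (hAe v).1 (hAe v).2 z
  rw [hid v z, norm_mul, ker_abs] at hb
  have hCnn : 0 ≤ C := le_trans (norm_nonneg _) hvC
  calc ‖Ae 0 z‖
      ≤ (q v * Real.exp (r * ‖z‖ ^ 2 / 2)) / Real.exp (r * (z * (starRingEnd ℂ) v).re) := by
        rw [le_div_iff₀ (Real.exp_pos _)]
        exact hb
    _ = q v * Real.exp (r * ‖z‖ ^ 2 / 2 - r * (z * (starRingEnd ℂ) v).re) := by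
        rw [mul_div_assoc, ← Real.exp_sub]
    _ ≤ C * Real.exp (r * ‖z‖ ^ 2 / 2 - N * ‖z‖) :=
        mul_le_mul hvC (Real.exp_le_exp.mpr (by linarith)) (Real.exp_pos _).le hCnn
end

section
/- If φ is entire and the domain D(M_φ) = {g ∈ F : φg ∈ F} contains some polynomial p of degree k, then D(M_φ) contains every polynomial of degree ≤ k. -/
open MeasureTheory Complex Filter

/-- A polynomial of degree at most `k` is bounded by `B * ‖z‖ ^ k` for `‖z‖ ≥ 1`. -/
lemma poly_upper_bound (s : Polynomial ℂ) (k : ℕ) (hs : s.degree ≤ (k:ℕ)) :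
    ∃ B : ℝ, 0 ≤ B ∧ ∀ z : ℂ, 1 ≤ ‖z‖ → ‖s.eval z‖ ≤ B * ‖z‖^k := by
  refine ⟨∑ i ∈ Finset.range (k+1), ‖s.coeff i‖, Finset.sum_nonneg fun _ _ => norm_nonneg _, ?_⟩
  intro z hz
  have hnd : s.natDegree < k + 1 :=
    Nat.lt_succ_of_le (Polynomial.natDegree_le_iff_degree_le.2 hs)
  rw [Polynomial.eval_eq_sum_range' hnd, Finset.sum_mul]
  refine (norm_sum_le _ _).trans (Finset.sum_le_sum fun i hi => ?_)
  rw [norm_mul, norm_pow]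
  exact mul_le_mul_of_nonneg_left
    (pow_le_pow_right₀ hz (Nat.lt_succ_iff.1 (Finset.mem_range.1 hi))) (norm_nonneg _)

/-- A polynomial of degree exactly `k` dominates `c * ‖z‖ ^ k` for large `‖z‖`. -/
lemma poly_lower_bound (p : Polynomial ℂ) (k : ℕ) (hp : p.degree = (k:ℕ)) :
    ∃ c : ℝ, 0 < c ∧ ∃ R : ℝ, 1 ≤ R ∧ ∀ z : ℂ, R ≤ ‖z‖ → c * ‖z‖^k ≤ ‖p.eval z‖ := by
  have hp0 : p ≠ 0 := fun h => by simp [h] at hp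
  have hlead : p.leadingCoeff ≠ 0 := Polynomial.leadingCoeff_ne_zero.2 hp0
  have hc0 : (0:ℝ) < ‖p.leadingCoeff‖ := norm_pos_iff.2 hlead
  have hnat : p.natDegree = k := Polynomial.natDegree_eq_of_degree_eq_some hp
  have heval : ∀ z : ℂ, p.eval z = p.eraseLead.eval z + p.leadingCoeff * z ^ k := by
    intro z
    conv_lhs => rw [← p.eraseLead_add_C_mul_X_pow]
    simp [hnat]
  rcases Nat.eq_zero_or_pos k with hk | hk
  · subst hk
    have hs0 : p.eraseLead = 0 := by
      by_contra h
      have := p.eraseLead_natDegree_lt_or_eraseLead_eq_zero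
      rcases this with h1 | h1
      · rw [hnat] at h1; omega
      · exact h h1
    refine ⟨‖p.leadingCoeff‖, hc0, 1, le_refl _, fun z _ => ?_⟩
    rw [heval z, hs0]
    simp
  · have hsdeg : p.eraseLead.degree ≤ ((k-1 : ℕ) : WithBot ℕ) := by
      by_cases h0 : p.eraseLead = 0
      · simp [h0]
      · have h1 : p.eraseLead.natDegree < k := by
          rcases p.eraseLead_natDegree_lt_or_eraseLead_eq_zero with h | h
          · omega
          · exact absurd h h0
        exact Polynomial.degree_le_of_natDegree_le (by omega)
    obtain ⟨B, hB0, hB⟩ := poly_upper_bound p.eraseLead (k-1) hsdeg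
    refine ⟨‖p.leadingCoeff‖/2, by positivity,
      max 1 (2*B/‖p.leadingCoeff‖ + 1), le_max_left _ _, ?_⟩
    intro z hz
    have hz1 : 1 ≤ ‖z‖ := le_trans (le_max_left _ _) hz
    have hz2 : 2*B/‖p.leadingCoeff‖ ≤ ‖z‖ := by
      have := le_trans (le_max_right _ _) hz; linarith
    have hzpos : (0:ℝ) < ‖z‖ := lt_of_lt_of_le one_pos hz1
    have hsplit : ‖z‖^k = ‖z‖ * ‖z‖^(k-1) := by
      rw [← pow_succ']
      congr 1; omega
    have h1 : ‖p.eraseLead.eval z‖ ≤ B * ‖z‖^(k-1) := hB z hz1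
    have h2 : B * ‖z‖^(k-1) ≤ (‖p.leadingCoeff‖/2) * ‖z‖^k := by
      rw [hsplit, ← mul_assoc]
      refine mul_le_mul_of_nonneg_right ?_ (by positivity)
      rw [div_le_iff₀ hc0] at hz2
      nlinarith
    have h3 : ‖p.leadingCoeff * z ^ k‖ = ‖p.leadingCoeff‖ * ‖z‖^k := by
      rw [norm_mul, norm_pow]
    calc ‖p.leadingCoeff‖/2 * ‖z‖^k
        = ‖p.leadingCoeff‖ * ‖z‖^k - ‖p.leadingCoeff‖/2 * ‖z‖^k := by ring
      _ ≤ ‖p.leadingCoeff * z^k‖ - ‖p.eraseLead.eval z‖ := by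
          rw [h3]; have := le_trans h1 h2; linarith
      _ ≤ ‖p.eval z‖ := by
          rw [heval z]
          have h4 := norm_sub_le (p.eraseLead.eval z + p.leadingCoeff * z^k) (p.eraseLead.eval z)
          rw [add_sub_cancel_left] at h4
          linarith

/-- The Gaussian measure of a closed ball is finite. -/
lemma gaussianM_closedBall_lt_top (r : ℝ) (R : ℝ) :
    gaussianM r (Metric.closedBall (0:ℂ) R) < ⊤ := by
  rw [gaussianM, withDensity_apply _ measurableSet_closedBall]
  calc ∫⁻ z in Metric.closedBall (0:ℂ) R,
        ENNReal.ofReal ((r / Real.pi) * Real.exp (-r * ‖z‖ ^ 2))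
      ≤ ∫⁻ _ in Metric.closedBall (0:ℂ) R, ENNReal.ofReal (|r| / Real.pi) := by
        refine setLIntegral_mono' measurableSet_closedBall fun z _ => ?_
        refine ENNReal.ofReal_le_ofReal ?_
        rcases le_or_gt r 0 with h | h
        · have h1 : r / Real.pi * Real.exp (-r * ‖z‖ ^ 2) ≤ 0 := by
            apply mul_nonpos_of_nonpos_of_nonneg
            · exact div_nonpos_of_nonpos_of_nonneg h Real.pi_pos.le
            · positivity
          exact h1.trans (by positivity)
        · have h1 : Real.exp (-r * ‖z‖ ^ 2) ≤ 1 := by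
            rw [Real.exp_le_one_iff]
            nlinarith [sq_nonneg (‖z‖)]
          rw [abs_of_pos h]
          calc r / Real.pi * Real.exp (-r * ‖z‖ ^ 2) ≤ r / Real.pi * 1 :=
              mul_le_mul_of_nonneg_left h1 (by positivity)
            _ = r / Real.pi := mul_one _
    _ = ENNReal.ofReal (|r| / Real.pi) * volume (Metric.closedBall (0:ℂ) R) := by
        rw [setLIntegral_const]
    _ < ⊤ := ENNReal.mul_lt_top ENNReal.ofReal_lt_top
        (isCompact_closedBall _ _).measure_lt_top

theorem stmt18 (r : ℝ) (hr : 0 < r) (φ : ℂ → ℂ) (hφ : Differentiable ℂ φ)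
    (k : ℕ) (p : Polynomial ℂ) (hp : p.degree = (k : ℕ))
    (hmem : MemLp (fun z : ℂ => φ z * p.eval z) 2 (gaussianM r)) :
    ∀ q : Polynomial ℂ, q.degree ≤ (k : ℕ) →
      MemLp (fun z : ℂ => φ z * q.eval z) 2 (gaussianM r) := by
  intro q hq
  obtain ⟨Bq, hBq0, hBq⟩ := poly_upper_bound q k hq
  obtain ⟨c, hc, R, hR1, hlow⟩ := poly_lower_bound p k hp
  set C := Bq / c with hC
  have hC0 : 0 ≤ C := div_nonneg hBq0 hc.le
  have hfc : Continuous fun z : ℂ => φ z * q.eval z :=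
    hφ.continuous.mul q.continuous
  have hfcp : Continuous fun z : ℂ => φ z * p.eval z :=
    hφ.continuous.mul p.continuous
  obtain ⟨M, hM⟩ := (isCompact_closedBall (0:ℂ) R).exists_bound_of_continuousOn
    hfc.continuousOn
  set S := Metric.closedBall (0:ℂ) R with hS
  set g : ℂ → ℝ := fun z => C * ‖φ z * p.eval z‖ + S.indicator (fun _ => M) z with hg
  have hgmem : MemLp g 2 (gaussianM r) := by
    refine MemLp.add ?_ ?_
    · exact hmem.norm.const_mul C
    · exact memLp_indicator_const 2 measurableSet_closedBall M
        (Or.inr (gaussianM_closedBall_lt_top r R).ne)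
  refine MemLp.of_le hgmem hfc.aestronglyMeasurable (ae_of_all _ fun z => ?_)
  have hbound : ‖φ z * q.eval z‖ ≤ g z := by
    by_cases hz : z ∈ S
    · have h1 : ‖φ z * q.eval z‖ ≤ M := hM z hz
      have h2 : S.indicator (fun _ => M) z = M := Set.indicator_of_mem hz _
      have h3 : 0 ≤ C * ‖φ z * p.eval z‖ := mul_nonneg hC0 (norm_nonneg _)
      simp only [hg, h2]
      linarith
    · have hzR : R < ‖z‖ := by
        simp only [hS, Metric.mem_closedBall, dist_zero_right, not_le] at hz
        exact hz
      have hz1 : 1 ≤ ‖z‖ := hR1.trans hzR.le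
      have h1 : ‖q.eval z‖ ≤ Bq * ‖z‖^k := hBq z hz1
      have h2 : c * ‖z‖^k ≤ ‖p.eval z‖ := hlow z hzR.le
      have h3 : ‖q.eval z‖ ≤ C * ‖p.eval z‖ := by
        rw [hC, div_mul_eq_mul_div, le_div_iff₀ hc]
        calc ‖q.eval z‖ * c = c * ‖q.eval z‖ := by ring
          _ ≤ c * (Bq * ‖z‖^k) := mul_le_mul_of_nonneg_left h1 hc.le
          _ = Bq * (c * ‖z‖^k) := by ring
          _ ≤ Bq * ‖p.eval z‖ := mul_le_mul_of_nonneg_left h2 hBq0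
      have h4 : S.indicator (fun _ => M) z = 0 := Set.indicator_of_notMem hz _
      simp only [hg, h4, add_zero]
      calc ‖φ z * q.eval z‖ = ‖φ z‖ * ‖q.eval z‖ := norm_mul _ _
        _ ≤ ‖φ z‖ * (C * ‖p.eval z‖) := mul_le_mul_of_nonneg_left h3 (norm_nonneg _)
        _ = C * (‖φ z‖ * ‖p.eval z‖) := by ring
        _ = C * ‖φ z * p.eval z‖ := by rw [norm_mul]
  calc ‖φ z * q.eval z‖ ≤ g z := hbound
    _ ≤ |g z| := le_abs_self _
    _ = ‖g z‖ := (Real.norm_eq_abs _).symm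
end
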